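/- arXiv:1906.00071 — 3 statements merged into one kernel-verified Lean document; each statement's English description precedes it below -/
import Mathlib

section
/- Let n be a natural number and let N be a complex number with N ∉ ℤ and −(n+1) < Re N < 0. Define the interpolated Euler characteristic χ_P(O(n)) := Γ(N+n+1)/(Γ(n+1)·Γ(N+1)). Then χ_P(O(n)) = ((e^{2πi(N+1)} − 1)/(2πi)) · ∫_{−∞}^{0} e^{nξ} · (1 − e^{−ξ})^{−(N+1)} dξ, where for ξ < 0 the power (1 − e^{−ξ})^{−(N+1)} of the negative real number 1 − e^{−ξ} is taken with the principal branch of the complex power (argument π). -/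
open MeasureTheory Complex Real

/-- Pointwise change-of-variables identity for the substitution `t = e^ξ`. -/
lemma aux_point (N : ℂ) (n : ℕ) {ξ : ℝ} (hξ : ξ < 0) :
    |Real.exp ξ| • (((Real.exp ξ : ℝ) : ℂ) ^ (N + n) *
        ((1 - Real.exp ξ : ℝ) : ℂ) ^ (-(N + 1)) *
        Complex.exp (Real.pi * Complex.I * (-(N + 1)))) =
      Complex.exp (n * ξ) * (1 - Complex.exp (-(ξ : ℂ))) ^ (-(N + 1)) := by
  have ht : (0 : ℝ) < Real.exp ξ := Real.exp_pos ξ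
  have ht1 : Real.exp ξ < 1 := Real.exp_lt_one_iff.mpr hξ
  set t : ℝ := Real.exp ξ with htdef
  have htne : (t : ℂ) ≠ 0 := by exact_mod_cast ht.ne'
  -- rewrite the base of the power on the RHS
  have h1 : (1 : ℂ) - Complex.exp (-(ξ : ℂ)) = (((t - 1) / t : ℝ) : ℂ) := by
    have he : Complex.exp (-(ξ : ℂ)) = ((Real.exp (-ξ) : ℝ) : ℂ) := by
      rw [Complex.ofReal_exp, Complex.ofReal_neg]
    rw [he, Real.exp_neg]
    push_cast
    field_simp
    rw [htdef, Complex.ofReal_exp]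
    ring
  have hle : ((t - 1) / t : ℝ) ≤ 0 :=
    div_nonpos_of_nonpos_of_nonneg (by linarith) ht.le
  have h2 : (((t - 1) / t : ℝ) : ℂ) ^ (-(N + 1)) =
      (((1 - t) / t : ℝ) : ℂ) ^ (-(N + 1)) *
        Complex.exp (Real.pi * Complex.I * (-(N + 1))) := by
    rw [Complex.ofReal_cpow_of_nonpos hle]
    congr 2
    push_cast
    ring
  have harg : (Complex.arg (t : ℂ)) ≠ Real.pi := by
    rw [Complex.arg_ofReal_of_nonneg ht.le]
    exact Ne.symm Real.pi_ne_zero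
  have h3 : (((1 - t) / t : ℝ) : ℂ) ^ (-(N + 1)) =
      ((1 - t : ℝ) : ℂ) ^ (-(N + 1)) * (((t : ℂ)) ^ (-(N + 1)))⁻¹ := by
    have hdiv : ((1 - t) / t : ℝ) = (1 - t) * t⁻¹ := by ring
    rw [hdiv, Complex.ofReal_mul,
      Complex.mul_cpow_ofReal_nonneg (by linarith) (inv_nonneg.mpr ht.le)]
    congr 1
    rw [Complex.ofReal_inv, Complex.inv_cpow _ _ harg]
  have hexp : Complex.exp ((n : ℂ) * ξ) = ((t : ℂ)) ^ (n : ℕ) := by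
    rw [Complex.exp_nat_mul, htdef, Complex.ofReal_exp]
  have hinv : (((t : ℂ)) ^ (-(N + 1)))⁻¹ = (t : ℂ) ^ (N + 1) := by
    rw [← Complex.cpow_neg, neg_neg]
  have hc1 : (t : ℂ) ^ (N + n + 1) = (t : ℂ) ^ (N + n) * (t : ℂ) := by
    rw [Complex.cpow_add _ _ htne, Complex.cpow_one]
  have hc2 : (t : ℂ) ^ (N + n + 1) = (t : ℂ) ^ (n : ℂ) * (t : ℂ) ^ (N + 1) := by
    rw [← Complex.cpow_add _ _ htne]
    congr 1
    ring
  rw [h1, h2, h3, hexp, hinv, abs_of_pos ht, real_smul, ← Complex.cpow_natCast]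
  linear_combination (((1 - t : ℝ) : ℂ) ^ (-(N + 1)) *
      Complex.exp (Real.pi * Complex.I * (-(N + 1)))) * (hc2 - hc1)

/-- **Proposition 1** (interpolated Riemann–Roch for projective space).
For `n ∈ ℕ` and `N ∈ ℂ` with `N ∉ ℤ` and `-(n+1) < Re N < 0`, the interpolated
Euler characteristic `χ_P(O(n)) = Γ(N+n+1)/(Γ(n+1)Γ(N+1))` equals
`((e^{2πi(N+1)} - 1)/(2πi)) ∫_{-∞}^0 e^{nξ} (1 - e^{-ξ})^{-(N+1)} dξ`,
complex powers being principal. -/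
theorem chi_proj_eq_halfline_integral (n : ℕ) (N : ℂ)
    (hN : N ∉ Set.range ((↑) : ℤ → ℂ))
    (h₁ : -(n + 1 : ℝ) < N.re) (h₂ : N.re < 0) :
    Complex.Gamma (N + n + 1) / (Complex.Gamma (n + 1) * Complex.Gamma (N + 1)) =
      (Complex.exp (2 * Real.pi * Complex.I * (N + 1)) - 1) / (2 * Real.pi * Complex.I) *
        ∫ ξ in Set.Iio (0 : ℝ),
          Complex.exp (n * ξ) * (1 - Complex.exp (-(ξ : ℂ))) ^ (-(N + 1)) := by
  have hπ : (Real.pi : ℂ) ≠ 0 := by exact_mod_cast Real.pi_ne_zero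
  have hsin : Complex.sin (Real.pi * N) ≠ 0 := by
    rw [Complex.sin_ne_zero_iff]
    intro k hk
    exact hN ⟨k, (mul_left_cancel₀ hπ (by rw [hk]; ring)).symm⟩
  have hΓ1 : Complex.Gamma (N + 1) ≠ 0 := by
    apply Complex.Gamma_ne_zero
    intro m hm
    exact hN ⟨-(m + 1 : ℤ), by push_cast; linear_combination -hm⟩
  have hΓn : Complex.Gamma ((n : ℂ) + 1) ≠ 0 := by
    rw [Complex.Gamma_nat_eq_factorial]
    exact_mod_cast Nat.cast_ne_zero.mpr (Nat.factorial_ne_zero n)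
  -- the image of `(-∞, 0)` under `exp`
  have himg : Real.exp '' Set.Iio (0 : ℝ) = Set.Ioo 0 1 := by
    ext y
    constructor
    · rintro ⟨x, hx, rfl⟩
      exact ⟨Real.exp_pos x, Real.exp_lt_one_iff.mpr hx⟩
    · rintro ⟨h0, h1⟩
      exact ⟨Real.log y, Real.log_neg h0 h1, Real.exp_log h0⟩
  set g : ℝ → ℂ := fun t => ((t : ℝ) : ℂ) ^ (N + n) * ((1 - t : ℝ) : ℂ) ^ (-(N + 1)) *
      Complex.exp (Real.pi * Complex.I * (-(N + 1))) with hg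
  -- change of variables
  have hsub : ∫ t in Set.Ioo (0 : ℝ) 1, g t =
      ∫ ξ in Set.Iio (0 : ℝ),
        Complex.exp (n * ξ) * (1 - Complex.exp (-(ξ : ℂ))) ^ (-(N + 1)) := by
    rw [← himg,
      integral_image_eq_integral_abs_deriv_smul measurableSet_Iio
        (fun x _ => (Real.hasDerivAt_exp x).hasDerivWithinAt) Real.exp_injective.injOn g]
    refine setIntegral_congr_fun measurableSet_Iio fun ξ hξ => ?_
    exact aux_point N n hξ
  -- relate to the Beta integral
  have hbeta : Complex.betaIntegral (N + n + 1) (-N) =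
      ∫ t in Set.Ioo (0 : ℝ) 1, ((t : ℝ) : ℂ) ^ (N + n) * ((1 - t : ℝ) : ℂ) ^ (-(N + 1)) := by
    rw [Complex.betaIntegral, intervalIntegral.integral_of_le zero_le_one,
      MeasureTheory.integral_Ioc_eq_integral_Ioo]
    refine setIntegral_congr_fun measurableSet_Ioo fun t ht => ?_
    push_cast
    rw [show N + (n : ℂ) + 1 - 1 = N + n by ring, show -N - 1 = -(N + 1) by ring]
  have hIoo : ∫ t in Set.Ioo (0 : ℝ) 1, g t =
      Complex.betaIntegral (N + n + 1) (-N) *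
        Complex.exp (Real.pi * Complex.I * (-(N + 1))) := by
    rw [hbeta, ← integral_mul_const]
  -- evaluate the Beta integral via Gamma functions
  have hu : 0 < (N + n + 1).re := by
    simp only [Complex.add_re, Complex.natCast_re, Complex.one_re]
    linarith
  have hv : 0 < (-N).re := by
    simp only [Complex.neg_re]
    linarith
  have hB := Complex.Gamma_mul_Gamma_eq_betaIntegral hu hv
  rw [show N + (n : ℂ) + 1 + -N = (n : ℂ) + 1 by ring] at hB
  have hbval : Complex.betaIntegral (N + n + 1) (-N) =
      Complex.Gamma (N + n + 1) * Complex.Gamma (-N) / Complex.Gamma ((n : ℂ) + 1) := by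
    rw [eq_div_iff hΓn]
    linear_combination -hB
  rw [← hsub, hIoo, hbval]
  -- final algebra via the reflection formula
  set a : ℂ := Complex.exp (Real.pi * Complex.I * N) with hadef
  have ha0 : a ≠ 0 := Complex.exp_ne_zero _
  have h2pi : Complex.exp (2 * (Real.pi : ℂ) * Complex.I * (N + 1)) = a * a := by
    have h : Complex.exp (2 * (Real.pi : ℂ) * Complex.I * (N + 1)) =
        Complex.exp ((Real.pi : ℂ) * Complex.I * N) *
          Complex.exp ((Real.pi : ℂ) * Complex.I * N) *
          Complex.exp (2 * (Real.pi : ℂ) * Complex.I) := by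
      rw [← Complex.exp_add, ← Complex.exp_add]
      congr 1
      ring
    rw [h, Complex.exp_two_pi_mul_I, mul_one, hadef]
  have hEval : Complex.exp ((Real.pi : ℂ) * Complex.I * (-(N + 1))) = -a⁻¹ := by
    have h : Complex.exp ((Real.pi : ℂ) * Complex.I * (-(N + 1))) =
        (Complex.exp ((Real.pi : ℂ) * Complex.I * N) *
          Complex.exp ((Real.pi : ℂ) * Complex.I))⁻¹ := by
      rw [← Complex.exp_add, ← Complex.exp_neg]
      congr 1
      ring
    rw [h, Complex.exp_pi_mul_I, hadef, mul_neg_one, ← neg_inv]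
  have hS : Complex.sin ((Real.pi : ℂ) * N) = (a⁻¹ - a) * Complex.I / 2 := by
    have e1 : Complex.exp (-((Real.pi : ℂ) * N) * Complex.I) = a⁻¹ := by
      rw [hadef, ← Complex.exp_neg]
      congr 1
      ring
    have e2 : Complex.exp (((Real.pi : ℂ) * N) * Complex.I) = a := by
      rw [hadef]
      congr 1
      ring
    rw [Complex.sin, e1, e2]
  have hrefl : Complex.Gamma (-N) * Complex.Gamma (N + 1) =
      (Real.pi : ℂ) / -Complex.sin ((Real.pi : ℂ) * N) := by
    have h := Complex.Gamma_mul_Gamma_one_sub (-N)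
    rw [show (1 : ℂ) - -N = N + 1 by ring,
      show (Real.pi : ℂ) * -N = -((Real.pi : ℂ) * N) by ring, Complex.sin_neg] at h
    exact h
  have hkey : Complex.Gamma (-N) * Complex.Gamma (N + 1) * Complex.sin ((Real.pi : ℂ) * N) =
      -(Real.pi : ℂ) := by
    rw [hrefl, div_neg, neg_mul, div_mul_cancel₀ _ hsin]
  rw [h2pi, hEval]
  have hI : (Complex.I : ℂ) ≠ 0 := Complex.I_ne_zero
  rw [hS] at hkey
  have hkey2 : Complex.Gamma (-N) * Complex.Gamma (N + 1) * (a⁻¹ - a) * Complex.I =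
      -(2 * (Real.pi : ℂ)) := by
    linear_combination 2 * hkey
  have hm2 : Complex.Gamma (-N) * Complex.Gamma (N + 1) * (1 - a * a) =
      2 * (Real.pi : ℂ) * a * Complex.I := by
    linear_combination (-(Complex.I * a)) * hkey2 -
      (Complex.Gamma (-N) * Complex.Gamma (N + 1)) * (mul_inv_cancel₀ ha0) +
      (Complex.Gamma (-N) * Complex.Gamma (N + 1) * (a * a⁻¹ - a * a)) * Complex.I_sq
  field_simp
  linear_combination (-(Complex.Gamma (N + n + 1))) * hm2
end

section
/- Let k ≥ 1 and n be natural numbers and let N be a complex number with N ∉ ℤ. Then ∏_{j=0}^{k−1} Γ(N+n+j+1)·Γ(j+1)/(Γ(n+j+1)·Γ(N+j+1)) = ((−1)^{k(k−1)/2}/k!) · (sin(π(N+1))/π)^k · ∏_{i=0}^{k−1} Γ(n+N+1+i)·Γ(−N−k+1+i)·Γ(2+i)/Γ(n+1+i). -/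
open Complex Real Finset

/-- **Proposition 2**, Gamma-function form: for `k ≥ 1`, `n ∈ ℕ` and `N ∈ ℂ`
with `N ∉ ℤ`, the interpolated Euler characteristic
`χ_G(k,N,n) = ∏_{j=0}^{k-1} Γ(N+n+j+1)Γ(j+1)/(Γ(n+j+1)Γ(N+j+1))` equals
`((-1)^{k(k-1)/2}/k!) (sin(π(N+1))/π)^k` times Selberg's closed-form evaluation
`∏_{i=0}^{k-1} Γ(n+N+1+i)Γ(-N-k+1+i)Γ(2+i)/Γ(n+1+i)`. -/
theorem chi_grassmannian_eq_selberg_evaluation (k n : ℕ) (hk : 1 ≤ k) (N : ℂ)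
    (hN : N ∉ Set.range ((↑) : ℤ → ℂ)) :
    (∏ j ∈ Finset.range k,
        Complex.Gamma (N + n + j + 1) * Complex.Gamma (j + 1) /
          (Complex.Gamma (n + j + 1) * Complex.Gamma (N + j + 1))) =
      ((-1 : ℂ) ^ (k * (k - 1) / 2) / (Nat.factorial k : ℂ)) *
        (Complex.sin (Real.pi * (N + 1)) / Real.pi) ^ k *
        ∏ i ∈ Finset.range k,
          Complex.Gamma ((n : ℂ) + N + 1 + i) * Complex.Gamma (-N - k + 1 + i) *
            Complex.Gamma (2 + i) / Complex.Gamma ((n : ℂ) + 1 + i) := by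
  have hπ : (Real.pi : ℂ) ≠ 0 := Complex.ofReal_ne_zero.mpr Real.pi_ne_zero
  set c : ℂ := Complex.sin (Real.pi * (N + 1)) / Real.pi with hc
  -- step 1: termwise identity
  have key : ∀ j ∈ Finset.range k,
      Complex.Gamma (N + n + j + 1) * Complex.Gamma (j + 1) /
        (Complex.Gamma (n + j + 1) * Complex.Gamma (N + j + 1)) =
      (-1 : ℂ)^j * c *
        (Complex.Gamma ((n:ℂ) + N + 1 + j) * Complex.Gamma (-N - j) *
          Complex.Gamma (2 + j) / Complex.Gamma ((n:ℂ) + 1 + j)) / ((j:ℂ) + 1) := by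
    intro j _
    have hshift : ∀ (z : ℂ) (m : ℕ),
        Complex.sin (Real.pi * (z + m)) = (-1)^m * Complex.sin (Real.pi * z) := by
      intro z m
      induction m with
      | zero => simp
      | succ m ih =>
        have h : (Real.pi : ℂ) * (z + (m+1 : ℕ)) = Real.pi * (z + m) + Real.pi := by
          push_cast; ring
        rw [h, Complex.sin_add_pi, ih]; ring
    have hsin : Complex.sin ((Real.pi : ℂ) * (N + 1)) ≠ 0 := by
      intro h
      rcases Complex.sin_eq_zero_iff.mp h with ⟨m, hm⟩
      apply hN
      refine ⟨m - 1, ?_⟩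
      rw [mul_comm] at hm
      have h2 : N + 1 = (m : ℂ) := mul_right_cancel₀ hπ hm
      push_cast
      linear_combination -h2
    have hΓN : Complex.Gamma (N + j + 1) ≠ 0 :=
      Complex.Gamma_ne_zero (fun m h => hN ⟨-(m:ℤ) - j - 1, by push_cast; linear_combination -h⟩)
    have hΓN' : Complex.Gamma (-N - j) ≠ 0 :=
      Complex.Gamma_ne_zero (fun m h => hN ⟨(m:ℤ) - j, by push_cast; linear_combination h⟩)
    have hpos : ∀ z : ℂ, 0 < z.re → Complex.Gamma z ≠ 0 := fun z hz =>
      Complex.Gamma_ne_zero_of_re_pos hz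
    have h1 : Complex.Gamma ((n:ℂ) + j + 1) ≠ 0 := hpos _ (by simp; positivity)
    have h2 : Complex.Gamma ((j:ℂ) + 1) ≠ 0 := hpos _ (by simp; positivity)
    have h3 : Complex.Gamma ((n:ℂ) + 1 + j) ≠ 0 := hpos _ (by simp; positivity)
    have hjne : ((j:ℂ) + 1) ≠ 0 := Nat.cast_add_one_ne_zero j
    have hrefl := Complex.Gamma_mul_Gamma_one_sub (-N - j)
    rw [show (1 : ℂ) - (-N - (j:ℂ)) = N + j + 1 by ring] at hrefl
    have hsj : Complex.sin ((Real.pi:ℂ) * (-N - j)) =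
        (-1)^j * Complex.sin ((Real.pi:ℂ) * (N + 1)) := by
      have ha := hshift N j
      have hb := hshift N 1
      rw [show (Real.pi:ℂ) * (-N - j) = -((Real.pi:ℂ) * (N + j)) by ring,
        Complex.sin_neg, ha]
      rw [show ((1:ℕ):ℂ) = (1:ℂ) by norm_num] at hb
      rw [hb]; ring
    rw [hsj] at hrefl
    have hsj2 : ((-1:ℂ)^j * Complex.sin ((Real.pi:ℂ) * (N + 1))) ≠ 0 :=
      mul_ne_zero (pow_ne_zero _ (by norm_num)) hsin
    have hrefl' : Complex.Gamma (-N - j) * Complex.Gamma (N + j + 1) *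
        ((-1:ℂ)^j * Complex.sin ((Real.pi:ℂ) * (N + 1))) = (Real.pi:ℂ) := by
      field_simp at hrefl; linear_combination hrefl
    have hg2 : Complex.Gamma (2 + (j:ℂ)) = ((j:ℂ) + 1) * Complex.Gamma (j + 1) := by
      rw [show (2:ℂ) + (j:ℂ) = ((j:ℂ) + 1) + 1 by ring, Complex.Gamma_add_one _ hjne]
    rw [show ((n:ℂ) + N + 1 + j) = N + n + j + 1 by ring,
      show ((n:ℂ) + 1 + j) = (n:ℂ) + j + 1 by ring, hg2, hc]
    field_simp
    linear_combination (-Complex.Gamma (N + (n:ℂ) + j + 1)) * hrefl'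
  rw [Finset.prod_congr rfl key]
  -- step 2: split the product
  rw [Finset.prod_div_distrib, Finset.prod_mul_distrib, Finset.prod_mul_distrib]
  have e1 : ∏ j ∈ Finset.range k, (-1 : ℂ)^j = (-1 : ℂ) ^ (k * (k - 1) / 2) := by
    rw [Finset.prod_pow_eq_pow_sum, Finset.sum_range_id]
  have e2 : ∏ _j ∈ Finset.range k, c = c ^ k := by rw [Finset.prod_const, Finset.card_range]
  have e3 : ∏ j ∈ Finset.range k, ((j:ℂ) + 1) = (Nat.factorial k : ℂ) := by
    rw [← Finset.prod_range_add_one_eq_factorial k, Nat.cast_prod]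
    push_cast
    rfl
  have e4 : ∏ j ∈ Finset.range k,
      (Complex.Gamma ((n:ℂ) + N + 1 + j) * Complex.Gamma (-N - j) *
        Complex.Gamma (2 + j) / Complex.Gamma ((n:ℂ) + 1 + j)) =
      ∏ i ∈ Finset.range k,
        Complex.Gamma ((n : ℂ) + N + 1 + i) * Complex.Gamma (-N - k + 1 + i) *
          Complex.Gamma (2 + i) / Complex.Gamma ((n : ℂ) + 1 + i) := by
    have split : ∀ (g : ℕ → ℂ),
        (∏ j ∈ Finset.range k, (Complex.Gamma ((n:ℂ) + N + 1 + j) * g j *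
          Complex.Gamma (2 + j) / Complex.Gamma ((n:ℂ) + 1 + j))) =
        (∏ j ∈ Finset.range k, (Complex.Gamma ((n:ℂ) + N + 1 + j) *
          Complex.Gamma (2 + j) / Complex.Gamma ((n:ℂ) + 1 + j))) *
        ∏ j ∈ Finset.range k, g j := by
      intro g
      rw [← Finset.prod_mul_distrib]
      exact Finset.prod_congr rfl (fun j _ => by ring)
    rw [split (fun j => Complex.Gamma (-N - j)),
      split (fun i => Complex.Gamma (-N - k + 1 + i))]
    congr 1
    rw [← Finset.prod_range_reflect (fun i => Complex.Gamma (-N - k + 1 + i)) k]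
    apply Finset.prod_congr rfl
    intro j hj
    have hj' : j < k := Finset.mem_range.mp hj
    have hnat : (k - 1 - j) + (j + 1) = k := by omega
    have hcast : ((k - 1 - j : ℕ) : ℂ) + ((j:ℂ) + 1) = (k:ℂ) := by
      exact_mod_cast congrArg (Nat.cast : ℕ → ℂ) hnat
    congr 1
    linear_combination -hcast
  rw [e1, e2, e3, e4]
  ring
end

section
/- For every natural number n, ∏_{j=0}^{1} Γ(n + j + 1/2)·Γ(j+1)/(Γ(n+j+1)·Γ(j + 1/2)) = (2n choose n)·(2n+2 choose n+1)/(2·16^n). -/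
open Real Finset Nat

lemma gamma_nat_add_half (n : ℕ) :
    Real.Gamma (n + 1 / 2) = Real.sqrt π * (2 * n)! / (4 ^ n * n !) := by
  induction n with
  | zero =>
      rw [show ((0 : ℕ) : ℝ) + 1 / 2 = 1 / 2 by norm_num, Real.Gamma_one_half_eq]
      norm_num
  | succ n ih =>
      have h : (((n : ℕ) + 1 : ℕ) : ℝ) + 1 / 2 = ((n : ℝ) + 1 / 2) + 1 := by push_cast; ring
      rw [h, Real.Gamma_add_one (by positivity), ih]
      have h2 : (2 * (n + 1))! = (2 * n + 2) * ((2 * n + 1) * (2 * n)!) := by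
        have : 2 * (n + 1) = (2 * n + 1) + 1 := by ring
        rw [this, Nat.factorial_succ, Nat.factorial_succ]
      have h3 : (n + 1)! = (n + 1) * n ! := Nat.factorial_succ n
      rw [h2, h3]
      have hn : (n ! : ℝ) ≠ 0 := by exact_mod_cast n.factorial_ne_zero
      have h4 : (4 : ℝ) ^ n ≠ 0 := by positivity
      field_simp
      push_cast
      ring

/-- The interpolated Euler characteristic of `O(n)` on the Grassmannian
`G(2, 3/2)` (i.e. `k = 2`, `N = -1/2`): for every `n ∈ ℕ`,
`∏_{j=0}^{1} Γ(n+j+1/2)Γ(j+1)/(Γ(n+j+1)Γ(j+1/2))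
  = (2n choose n)(2n+2 choose n+1)/(2·16ⁿ)`,
giving the coefficients `1, 6, 60, 700, 8820, …` of the Hilbert series at
`(t/16)ⁿ`. -/
theorem chi_G2_half (n : ℕ) :
    (∏ j ∈ Finset.range 2,
        Real.Gamma (n + j + 1 / 2) * Real.Gamma (j + 1) /
          (Real.Gamma (n + j + 1) * Real.Gamma (j + 1 / 2))) =
      ((2 * n).choose n : ℝ) * ((2 * n + 2).choose (n + 1)) / (2 * 16 ^ n) := by
  rw [Finset.prod_range_succ, Finset.prod_range_one]
  norm_num
  have e1 : Real.Gamma ((n : ℝ) + 1 + 1 / 2) = Real.sqrt π * (2 * (n + 1))! / (4 ^ (n + 1) * (n + 1)!) := by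
    rw [show ((n : ℝ) + 1 + 1 / 2) = (((n + 1 : ℕ) : ℝ) + 1 / 2) by push_cast; ring,
      gamma_nat_add_half]
  have e2 : Real.Gamma ((n : ℝ) + 1 + 1) = ((n + 1)! : ℝ) := by
    rw [show ((n : ℝ) + 1 + 1) = (((n + 1 : ℕ) : ℝ) + 1) by push_cast; ring,
      Real.Gamma_nat_eq_factorial]
  have e3 : Real.Gamma ((1 : ℝ) / 2) = Real.sqrt π := Real.Gamma_one_half_eq
  have e4 : Real.Gamma ((3 : ℝ) / 2) = (1 / 2) * Real.sqrt π := by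
    rw [show (3 : ℝ) / 2 = 1 / 2 + 1 by norm_num, Real.Gamma_add_one (by norm_num),
      Real.Gamma_one_half_eq]
  have c1 : ((2 * n).choose n : ℝ) = (2 * n)! / (n ! * n !) := by
    rw [Nat.cast_choose ℝ (by omega : n ≤ 2 * n), show 2 * n - n = n by omega]
  have c2 : ((2 * n + 2).choose (n + 1) : ℝ) = (2 * n + 2)! / ((n + 1)! * (n + 1)!) := by
    rw [Nat.cast_choose ℝ (by omega : n + 1 ≤ 2 * n + 2), show 2 * n + 2 - (n + 1) = n + 1 by omega]
  rw [gamma_nat_add_half, Real.Gamma_nat_eq_factorial, e1, e2, e3, e4, c1, c2]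
  have h2 : (2 * (n + 1))! = (2 * n + 2)! := by ring_nf
  rw [h2]
  have hn : (n ! : ℝ) ≠ 0 := by exact_mod_cast n.factorial_ne_zero
  have hn1 : ((n + 1)! : ℝ) ≠ 0 := by exact_mod_cast (n + 1).factorial_ne_zero
  have h2n : ((2 * n)! : ℝ) ≠ 0 := by exact_mod_cast (2 * n).factorial_ne_zero
  have h2n2 : ((2 * n + 2)! : ℝ) ≠ 0 := by exact_mod_cast (2 * n + 2).factorial_ne_zero
  have hs : Real.sqrt π ≠ 0 := by positivity
  have h4 : (4 : ℝ) ^ n ≠ 0 := by positivity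
  have h16 : (16 : ℝ) ^ n = 4 ^ n * 4 ^ n := by rw [← mul_pow]; norm_num
  field_simp
  rw [h16]
  ring
end
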